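/- Let X and Y be Banach spaces over 𝕂 (= ℝ or ℂ). Then every weakly compact bounded linear operator T : X → Y can be approximated in the operator norm by weakly compact operators that quasi attain their norm: the set QNA(X,Y) ∩ W(X,Y) is dense in W(X,Y), the space of weakly compact operators from X to Y with the operator norm. -/

import Mathlib

variable {𝕜 X Y : Type*} [RCLike 𝕜]
  [NormedAddCommGroup X] [NormedSpace 𝕜 X]
  [NormedAddCommGroup Y] [NormedSpace 𝕜 Y]

/-- `T` is weakly compact: the norm closure of `T '' B_X` is compact in the weak topology. -/
def IsWeaklyCompactOperator (T : X →L[𝕜] Y) : Prop :=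
  IsCompact (⇑(toWeakSpace 𝕜 Y) '' closure (⇑T '' Metric.closedBall 0 1))

/-- `T` quasi attains its norm. -/
def QuasiAttainsNorm (T : X →L[𝕜] Y) : Prop :=
  ∃ u ∈ closure (⇑T '' Metric.closedBall 0 1), ‖u‖ = ‖T‖

namespace QNAAux

open Metric ContinuousLinearMap Filter Topology Set

/-- Geometric step sizes. -/
noncomputable def eps (c : ℝ) (k : ℕ) : ℝ := c * (2⁻¹ : ℝ) ^ k

noncomputable def del (T : X →L[𝕜] Y) (c : ℝ) (k : ℕ) : ℝ := ‖T‖ * c * (4⁻¹ : ℝ) ^ k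

noncomputable def Dd (T : X →L[𝕜] Y) (c : ℝ) (k : ℕ) : ℝ :=
  (4 / 3) * (‖T‖ * c) * (4⁻¹ : ℝ) ^ k

lemma Dd_eq (T : X →L[𝕜] Y) (c : ℝ) (a : ℕ) :
    Dd T c a = del T c a + Dd T c (a + 1) := by
  simp only [Dd, del, pow_succ]; ring

lemma eps_nonneg {c : ℝ} (hc : 0 ≤ c) (k : ℕ) : 0 ≤ eps c k := by
  unfold eps; positivity

lemma eps_le_one {c : ℝ} (hc : 0 ≤ c) (hc8 : c ≤ 8⁻¹) (k : ℕ) : eps c k ≤ 1 := by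
  have h1 : (2⁻¹ : ℝ) ^ k ≤ 1 := pow_le_one₀ (by norm_num) (by norm_num)
  have h2 : eps c k ≤ c * 1 := by
    unfold eps
    exact mul_le_mul_of_nonneg_left h1 hc
  nlinarith

lemma del_nonneg (T : X →L[𝕜] Y) {c : ℝ} (hc : 0 ≤ c) (k : ℕ) : 0 ≤ del T c k := by
  unfold del; positivity

lemma Dd_nonneg (T : X →L[𝕜] Y) {c : ℝ} (hc : 0 ≤ c) (k : ℕ) : 0 ≤ Dd T c k := by
  unfold Dd; positivity

lemma del_le_Dd (T : X →L[𝕜] Y) {c : ℝ} (hc : 0 ≤ c) (k : ℕ) : del T c k ≤ Dd T c k := by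
  unfold del Dd
  have : (0:ℝ) ≤ ‖T‖ * c * (4⁻¹:ℝ)^k := by positivity
  nlinarith

/-- An almost-norming vector for an operator. -/
lemma exists_almost_norming (F : X →L[𝕜] Y) {δ : ℝ} (hδ : 0 < δ) :
    ∃ x : X, ‖x‖ ≤ 1 ∧ ‖F‖ - δ ≤ ‖F x‖ := by
  rcases le_or_gt ‖F‖ δ with h | h
  · exact ⟨0, by simp, by simp; linarith⟩
  · by_contra hcon
    push_neg at hcon
    have hb : ‖F‖ ≤ ‖F‖ - δ := by
      refine F.opNorm_le_bound' (by linarith) fun x hx0 => ?_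
      have hxpos : 0 < ‖x‖ := lt_of_le_of_ne (norm_nonneg x) (Ne.symm hx0)
      set u := ((‖x‖⁻¹ : ℝ) : 𝕜) • x with hudef
      have hu : ‖u‖ = 1 := by
        rw [hudef, norm_smul, RCLike.norm_ofReal, abs_of_nonneg (by positivity),
          inv_mul_cancel₀ hx0]
      have hcu := hcon u hu.le
      have hFu : ‖F u‖ = ‖x‖⁻¹ * ‖F x‖ := by
        rw [hudef, map_smul, norm_smul, RCLike.norm_ofReal, abs_of_nonneg (by positivity)]
      rw [hFu] at hcu
      have hFx : ‖F x‖ = ‖x‖ * (‖x‖⁻¹ * ‖F x‖) := by field_simp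
      nlinarith
    linarith

/-- The per-step data: a perturbation `p.1`, a near-norming point `p.2.1` and
a norming functional `p.2.2`. -/
def StepProp (T : X →L[𝕜] Y) (c : ℝ) (k : ℕ) (B : Y →L[𝕜] Y)
    (p : (Y →L[𝕜] Y) × X × (Y →L[𝕜] 𝕜)) : Prop :=
  ‖p.2.1‖ ≤ 1 ∧
  ‖B.comp T‖ - del T c k ≤ ‖(B.comp T) p.2.1‖ ∧
  ‖p.1 - 1‖ ≤ eps c k ∧
  (1 + eps c k) * ‖(B.comp T) p.2.1‖ ≤ ‖p.1 ((B.comp T) p.2.1)‖ ∧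
  (∀ y : Y, ‖p.1 y‖ ≤ ‖y‖ + eps c k * ‖p.2.2 y‖) ∧
  ‖p.2.2‖ ≤ 1

lemma exStep (T : X →L[𝕜] Y) (c : ℝ) (hM : 0 < ‖T‖) (hc : 0 < c) (k : ℕ) (B : Y →L[𝕜] Y) :
    ∃ p, StepProp T c k B p := by
  have hδ : 0 < del T c k := by unfold del; positivity
  have hε0 : 0 ≤ eps c k := eps_nonneg hc.le k
  obtain ⟨x, hx1, hx2⟩ := exists_almost_norming (B.comp T) hδ
  obtain ⟨g, hg1, hg2⟩ := exists_dual_vector'' 𝕜 ((B.comp T) x)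
  by_cases hy0 : (B.comp T) x = 0
  · refine ⟨(1, x, g), hx1, hx2, by simpa using hε0, ?_, fun y => ?_, hg1⟩
    · rw [hy0, norm_zero, mul_zero]
      exact norm_nonneg _
    · have : (0:ℝ) ≤ eps c k * ‖g y‖ := by positivity
      simp only [ContinuousLinearMap.one_apply]
      linarith
  · set y := (B.comp T) x with hydef
    have hyn : 0 < ‖y‖ := norm_pos_iff.mpr hy0
    set w : Y := ((eps c k / ‖y‖ : ℝ) : 𝕜) • y with hwdef
    have hw : ‖w‖ = eps c k := by
      rw [hwdef, norm_smul, RCLike.norm_ofReal, abs_of_nonneg (by positivity),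
        div_mul_cancel₀ _ hyn.ne']
    refine ⟨(1 + g.smulRight w, x, g), hx1, hx2, ?_, ?_, fun y' => ?_, hg1⟩
    · rw [add_sub_cancel_left]
      calc ‖g.smulRight w‖ = ‖g‖ * ‖w‖ := norm_smulRight_apply g w
        _ ≤ 1 * eps c k := mul_le_mul hg1 hw.le (norm_nonneg _) zero_le_one
        _ = eps c k := one_mul _
    · have key : (1 + g.smulRight w) y = ((1 + eps c k : ℝ) : 𝕜) • y := by
        rw [ContinuousLinearMap.add_apply, ContinuousLinearMap.one_apply, smulRight_apply, hg2, hwdef, smul_smul]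
        rw [← RCLike.ofReal_mul, mul_div_assoc', mul_comm, mul_div_assoc,
          div_self hyn.ne', mul_one]
        rw [← one_smul 𝕜 y, smul_smul, ← add_smul]
        push_cast
        ring_nf
        rw [one_smul]
      rw [key, norm_smul, RCLike.norm_ofReal, abs_of_nonneg (by linarith)]
    · calc ‖(1 + g.smulRight w) y'‖ = ‖y' + g y' • w‖ := by
            rw [ContinuousLinearMap.add_apply, ContinuousLinearMap.one_apply, smulRight_apply]
        _ ≤ ‖y'‖ + ‖g y' • w‖ := norm_add_le _ _
        _ = ‖y'‖ + ‖g y'‖ * ‖w‖ := by rw [norm_smul]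
        _ = ‖y'‖ + eps c k * ‖g y'‖ := by rw [hw]; ring

variable (T : X →L[𝕜] Y) (c : ℝ) (hM : 0 < ‖T‖) (hc : 0 < c)

noncomputable def Bseq : ℕ → (Y →L[𝕜] Y)
  | 0 => 1
  | k + 1 => (exStep T c hM hc k (Bseq k)).choose.1 * Bseq k

noncomputable def pick (k : ℕ) : (Y →L[𝕜] Y) × X × (Y →L[𝕜] 𝕜) :=
  (exStep T c hM hc k (Bseq T c hM hc k)).choose

lemma pick_spec (k : ℕ) : StepProp T c k (Bseq T c hM hc k) (pick T c hM hc k) :=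
  (exStep T c hM hc k (Bseq T c hM hc k)).choose_spec

lemma Bseq_succ (k : ℕ) :
    Bseq T c hM hc (k + 1) = (pick T c hM hc k).1 * Bseq T c hM hc k := rfl

lemma Bseq_zero : Bseq T c hM hc 0 = 1 := rfl

noncomputable def Tk (k : ℕ) : X →L[𝕜] Y := (Bseq T c hM hc k).comp T

noncomputable def xk (k : ℕ) : X := (pick T c hM hc k).2.1

noncomputable def gk (k : ℕ) : Y →L[𝕜] 𝕜 := (pick T c hM hc k).2.2

noncomputable def Ak (k : ℕ) : Y →L[𝕜] Y := (pick T c hM hc k).1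

lemma spec1 (k : ℕ) : ‖xk T c hM hc k‖ ≤ 1 := (pick_spec T c hM hc k).1

lemma spec2 (k : ℕ) :
    ‖Tk T c hM hc k‖ - del T c k ≤ ‖Tk T c hM hc k (xk T c hM hc k)‖ :=
  (pick_spec T c hM hc k).2.1

lemma spec3 (k : ℕ) : ‖Ak T c hM hc k - 1‖ ≤ eps c k := (pick_spec T c hM hc k).2.2.1

lemma spec4 (k : ℕ) :
    (1 + eps c k) * ‖Tk T c hM hc k (xk T c hM hc k)‖ ≤
      ‖Ak T c hM hc k (Tk T c hM hc k (xk T c hM hc k))‖ :=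
  (pick_spec T c hM hc k).2.2.2.1

lemma spec5 (k : ℕ) (y : Y) :
    ‖Ak T c hM hc k y‖ ≤ ‖y‖ + eps c k * ‖gk T c hM hc k y‖ :=
  (pick_spec T c hM hc k).2.2.2.2.1 y

lemma spec6 (k : ℕ) : ‖gk T c hM hc k‖ ≤ 1 := (pick_spec T c hM hc k).2.2.2.2.2

lemma Tk_succ (k : ℕ) :
    Tk T c hM hc (k + 1) = (Ak T c hM hc k).comp (Tk T c hM hc k) := rfl

lemma norm_one_CLM_le : ‖(1 : Y →L[𝕜] Y)‖ ≤ 1 := by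
  rw [ContinuousLinearMap.one_def]
  exact ContinuousLinearMap.norm_id_le

variable (hc8 : c ≤ 8⁻¹)
include hc8

lemma B1 (k : ℕ) : ‖Bseq T c hM hc k - 1‖ ≤ 4 * c - 4 * c * (2⁻¹ : ℝ) ^ k := by
  induction k with
  | zero =>
    rw [Bseq_zero, sub_self]
    simp
  | succ k ih =>
    have ht0 : (0:ℝ) < (2⁻¹ : ℝ) ^ k := by positivity
    have ht1 : (2⁻¹ : ℝ) ^ k ≤ 1 := pow_le_one₀ (by norm_num) (by norm_num)
    have hBn : ‖Bseq T c hM hc k‖ ≤ 3 / 2 := by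
      have h1 : ‖Bseq T c hM hc k‖ ≤ ‖Bseq T c hM hc k - 1‖ + ‖(1 : Y →L[𝕜] Y)‖ := by
        have := norm_add_le (Bseq T c hM hc k - 1) (1 : Y →L[𝕜] Y)
        simpa using this
      have h2 := norm_one_CLM_le (𝕜 := 𝕜) (Y := Y)
      nlinarith
    have heq : Bseq T c hM hc (k + 1) - 1
        = (Ak T c hM hc k - 1) * Bseq T c hM hc k + (Bseq T c hM hc k - 1) := by
      rw [Bseq_succ, sub_mul, one_mul]
      show (Ak T c hM hc k) * Bseq T c hM hc k - 1
        = (Ak T c hM hc k) * Bseq T c hM hc k - Bseq T c hM hc k + (Bseq T c hM hc k - 1)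
      abel
    have hmul : ‖(Ak T c hM hc k - 1) * Bseq T c hM hc k‖ ≤ eps c k * (3 / 2) := by
      calc ‖(Ak T c hM hc k - 1) * Bseq T c hM hc k‖
          ≤ ‖Ak T c hM hc k - 1‖ * ‖Bseq T c hM hc k‖ := norm_mul_le _ _
        _ ≤ eps c k * (3 / 2) :=
            mul_le_mul (spec3 T c hM hc k) hBn (norm_nonneg _) (eps_nonneg hc.le k)
    have hnorm : ‖Bseq T c hM hc (k + 1) - 1‖
        ≤ eps c k * (3 / 2) + (4 * c - 4 * c * (2⁻¹ : ℝ) ^ k) := by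
      rw [heq]
      exact (norm_add_le _ _).trans (add_le_add hmul ih)
    have hpow : (2⁻¹ : ℝ) ^ (k + 1) = (2⁻¹ : ℝ) ^ k * 2⁻¹ := pow_succ _ _
    have hε : eps c k = c * (2⁻¹ : ℝ) ^ k := rfl
    nlinarith [mul_nonneg hc.le ht0.le]

lemma B1' (k : ℕ) : ‖Bseq T c hM hc k - 1‖ ≤ 4 * c := by
  have h := B1 T c hM hc hc8 k
  have : (0:ℝ) ≤ 4 * c * (2⁻¹ : ℝ) ^ k := by positivity
  linarith

lemma Bnorm (k : ℕ) : ‖Bseq T c hM hc k‖ ≤ 3 / 2 := by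
  have h1 : ‖Bseq T c hM hc k‖ ≤ ‖Bseq T c hM hc k - 1‖ + ‖(1 : Y →L[𝕜] Y)‖ := by
    have := norm_add_le (Bseq T c hM hc k - 1) (1 : Y →L[𝕜] Y)
    simpa using this
  have h2 := norm_one_CLM_le (𝕜 := 𝕜) (Y := Y)
  have h3 := B1' T c hM hc hc8 k
  nlinarith

lemma Tk_sub_T (k : ℕ) : ‖Tk T c hM hc k - T‖ ≤ 4 * c * ‖T‖ := by
  have heq : Tk T c hM hc k - T = (Bseq T c hM hc k - 1).comp T := by
    ext x
    simp [Tk, ContinuousLinearMap.sub_apply, ContinuousLinearMap.comp_apply,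
      ContinuousLinearMap.one_apply]
  rw [heq]
  calc ‖(Bseq T c hM hc k - 1).comp T‖ ≤ ‖Bseq T c hM hc k - 1‖ * ‖T‖ := opNorm_comp_le _ _
    _ ≤ 4 * c * ‖T‖ := mul_le_mul_of_nonneg_right (B1' T c hM hc hc8 k) (norm_nonneg T)

lemma Tk_lb (k : ℕ) : ‖T‖ / 2 ≤ ‖Tk T c hM hc k‖ := by
  have h1 := Tk_sub_T T c hM hc hc8 k
  have h2 : ‖T‖ ≤ ‖Tk T c hM hc k‖ + ‖Tk T c hM hc k - T‖ := by
    have := norm_sub_norm_le (Tk T c hM hc k) T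
    linarith [abs_le.mp (abs_norm_sub_norm_le (Tk T c hM hc k) T)]
  nlinarith

lemma B4 (k : ℕ) :
    ‖Tk T c hM hc k‖ + eps c k * ‖Tk T c hM hc k‖ - 2 * del T c k
      ≤ ‖Tk T c hM hc (k + 1)‖ := by
  have h1 : ‖Tk T c hM hc (k + 1) (xk T c hM hc k)‖ ≤ ‖Tk T c hM hc (k + 1)‖ := by
    calc ‖Tk T c hM hc (k + 1) (xk T c hM hc k)‖
        ≤ ‖Tk T c hM hc (k + 1)‖ * ‖xk T c hM hc k‖ := le_opNorm _ _
      _ ≤ ‖Tk T c hM hc (k + 1)‖ :=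
          mul_le_of_le_one_right (norm_nonneg _) (spec1 T c hM hc k)
  have h2 : Tk T c hM hc (k + 1) (xk T c hM hc k)
      = Ak T c hM hc k (Tk T c hM hc k (xk T c hM hc k)) := rfl
  have h3 := spec4 T c hM hc k
  have h4 := spec2 T c hM hc k
  have hε0 := eps_nonneg hc.le k
  have hε1 := eps_le_one hc.le hc8 k
  have hδ0 := del_nonneg T hc.le k
  have h5 : (1 + eps c k) * (‖Tk T c hM hc k‖ - del T c k)
      ≤ (1 + eps c k) * ‖Tk T c hM hc k (xk T c hM hc k)‖ :=
    mul_le_mul_of_nonneg_left h4 (by linarith)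
  rw [h2] at h1
  nlinarith

lemma B5 (k : ℕ) :
    ‖Tk T c hM hc (k + 1) - Tk T c hM hc k‖ ≤ eps c k * ‖Tk T c hM hc k‖ := by
  have heq : Tk T c hM hc (k + 1) - Tk T c hM hc k
      = (Ak T c hM hc k - 1).comp (Tk T c hM hc k) := by
    ext x
    simp [Tk_succ, ContinuousLinearMap.sub_apply, ContinuousLinearMap.comp_apply,
      ContinuousLinearMap.one_apply]
  rw [heq]
  calc ‖(Ak T c hM hc k - 1).comp (Tk T c hM hc k)‖
      ≤ ‖Ak T c hM hc k - 1‖ * ‖Tk T c hM hc k‖ := opNorm_comp_le _ _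
    _ ≤ eps c k * ‖Tk T c hM hc k‖ :=
        mul_le_mul_of_nonneg_right (spec3 T c hM hc k) (norm_nonneg _)

lemma B6 (m : ℕ) : ∀ j k : ℕ, k = j + m + 1 →
    ‖Tk T c hM hc k (xk T c hM hc k)‖ + ‖Tk T c hM hc (j + 1)‖ - ‖Tk T c hM hc k‖
      - 2 * (Dd T c (j + 1) - Dd T c k)
      ≤ ‖Tk T c hM hc (j + 1) (xk T c hM hc k)‖ := by
  induction m with
  | zero =>
    intro j k hk
    subst hk
    simp only [Nat.add_zero]
    have : Dd T c (j + 1) - Dd T c (j + 1) = 0 := sub_self _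
    rw [this]
    linarith
  | succ m ih =>
    intro j k hk
    have hIH := ih (j + 1) k (by omega)
    have h1 : ‖Tk T c hM hc (j + 1 + 1) (xk T c hM hc k)‖
        ≤ ‖Tk T c hM hc (j + 1) (xk T c hM hc k)‖
          + ‖Tk T c hM hc (j + 1 + 1) - Tk T c hM hc (j + 1)‖ := by
      have ha : ‖Tk T c hM hc (j + 1 + 1) (xk T c hM hc k)
          - Tk T c hM hc (j + 1) (xk T c hM hc k)‖
          ≤ ‖Tk T c hM hc (j + 1 + 1) - Tk T c hM hc (j + 1)‖ := by
        have hb : Tk T c hM hc (j + 1 + 1) (xk T c hM hc k)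
            - Tk T c hM hc (j + 1) (xk T c hM hc k)
            = (Tk T c hM hc (j + 1 + 1) - Tk T c hM hc (j + 1)) (xk T c hM hc k) := by
          simp [ContinuousLinearMap.sub_apply]
        rw [hb]
        calc ‖(Tk T c hM hc (j + 1 + 1) - Tk T c hM hc (j + 1)) (xk T c hM hc k)‖
            ≤ ‖Tk T c hM hc (j + 1 + 1) - Tk T c hM hc (j + 1)‖ * ‖xk T c hM hc k‖ :=
              le_opNorm _ _
          _ ≤ _ := mul_le_of_le_one_right (norm_nonneg _) (spec1 T c hM hc k)
      have := norm_sub_norm_le (Tk T c hM hc (j + 1 + 1) (xk T c hM hc k))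
        (Tk T c hM hc (j + 1) (xk T c hM hc k))
      linarith
    have h2 := B5 T c hM hc hc8 (j + 1)
    have h3 := B4 T c hM hc hc8 (j + 1)
    have h4 := Dd_eq T c (j + 1)
    linarith

lemma B7 (j k : ℕ) (hjk : j < k) :
    ‖Tk T c hM hc j‖ - 3 * ‖T‖ * (2⁻¹ : ℝ) ^ j
      ≤ ‖gk T c hM hc j (Tk T c hM hc j (xk T c hM hc k))‖ := by
  obtain ⟨m, hm⟩ : ∃ m, k = j + m + 1 := ⟨k - j - 1, by omega⟩
  set G := ‖gk T c hM hc j (Tk T c hM hc j (xk T c hM hc k))‖ with hG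
  have h0 : ‖Tk T c hM hc (j + 1) (xk T c hM hc k)‖
      ≤ ‖Tk T c hM hc j (xk T c hM hc k)‖ + eps c j * G := by
    have : Tk T c hM hc (j + 1) (xk T c hM hc k)
        = Ak T c hM hc j (Tk T c hM hc j (xk T c hM hc k)) := rfl
    rw [this]
    exact spec5 T c hM hc j _
  have h1 : ‖Tk T c hM hc j (xk T c hM hc k)‖ ≤ ‖Tk T c hM hc j‖ := by
    calc ‖Tk T c hM hc j (xk T c hM hc k)‖
        ≤ ‖Tk T c hM hc j‖ * ‖xk T c hM hc k‖ := le_opNorm _ _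
      _ ≤ _ := mul_le_of_le_one_right (norm_nonneg _) (spec1 T c hM hc k)
  have h2 := B6 T c hM hc hc8 m j k hm
  have h3 := spec2 T c hM hc k
  have h4 := B4 T c hM hc hc8 j
  have h5 := del_le_Dd T (c := c) hc.le k
  have h6 := Dd_nonneg T (c := c) hc.le k
  -- so far : eps c j * G ≥ eps c j * ‖Tk j‖ - 2 * del T c j - 2 * Dd T c (j+1)
  have key : eps c j * ‖Tk T c hM hc j‖ - 2 * del T c j - 2 * Dd T c (j + 1)
      ≤ eps c j * G := by linarith
  -- numerics
  set t := (2⁻¹ : ℝ) ^ j with htdef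
  have ht0 : (0:ℝ) < t := by positivity
  have hq : (4⁻¹ : ℝ) ^ j = t * t := by
    rw [htdef, ← mul_pow]; norm_num
  have hεj : eps c j = c * t := rfl
  have hδj : del T c j = ‖T‖ * c * (t * t) := by rw [del, hq]
  have hDj : Dd T c (j + 1) = (4 / 3) * (‖T‖ * c) * ((t * t) * 4⁻¹) := by
    rw [Dd, pow_succ, hq]
  have hnum : eps c j * (‖Tk T c hM hc j‖ - 3 * ‖T‖ * t) ≤ eps c j * G := by
    rw [hεj] at key ⊢
    rw [hδj, hDj] at key
    nlinarith [mul_nonneg (mul_nonneg (norm_nonneg T) hc.le) (mul_nonneg ht0.le ht0.le)]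
  have hct : (0:ℝ) < eps c j := by rw [hεj]; positivity
  exact le_of_mul_le_mul_left hnum hct

end QNAAux

set_option maxHeartbeats 1600000 in
open QNAAux Metric ContinuousLinearMap Filter Topology Set in
/-- the quasi norm attaining weakly compact operators are dense (in operator norm)
in the space of weakly compact operators. -/
theorem weakly_compact_quasi_attaining_dense
    {𝕜 X Y : Type*} [RCLike 𝕜]
    [NormedAddCommGroup X] [NormedSpace 𝕜 X] [CompleteSpace X]
    [NormedAddCommGroup Y] [NormedSpace 𝕜 Y] [CompleteSpace Y]
    (T : X →L[𝕜] Y) (hT : IsWeaklyCompactOperator T) (ε : ℝ) (hε : 0 < ε) :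
    ∃ S : X →L[𝕜] Y, IsWeaklyCompactOperator S ∧ QuasiAttainsNorm S ∧ ‖S - T‖ < ε := by
  classical
  rcases eq_or_lt_of_le (norm_nonneg T) with h0 | hM
  · -- degenerate case ‖T‖ = 0
    refine ⟨T, hT, ⟨0, ?_, by simp [← h0]⟩, by simp [hε]⟩
    exact subset_closure ⟨0, by simp, map_zero T⟩
  set M := ‖T‖ with hMdef
  set c := min (ε / (4 * M + 1)) 8⁻¹ with hcdef
  have hD : (0:ℝ) < 4 * M + 1 := by positivity
  have hc : 0 < c := lt_min (div_pos hε hD) (by norm_num)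
  have hc8 : c ≤ 8⁻¹ := min_le_right _ _
  have hcε : 4 * c * M < ε := by
    have h1 : c ≤ ε / (4 * M + 1) := min_le_left _ _
    have h2 : c * (4 * M + 1) ≤ ε := by
      rw [← le_div_iff₀ hD]; exact h1
    nlinarith
  -- the sequence of perturbations
  have hdistseq : ∀ n, dist (Bseq T c hM hc n) (Bseq T c hM hc (n + 1)) ≤ 2 * c * 2⁻¹ ^ n := by
    intro n
    rw [dist_eq_norm, norm_sub_rev]
    have heq : Bseq T c hM hc (n + 1) - Bseq T c hM hc n
        = (Ak T c hM hc n - 1) * Bseq T c hM hc n := by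
      rw [Bseq_succ, sub_mul, one_mul]; rfl
    rw [heq]
    have h1 : ‖(Ak T c hM hc n - 1) * Bseq T c hM hc n‖ ≤ eps c n * (3 / 2) :=
      (norm_mul_le _ _).trans
        (mul_le_mul (spec3 T c hM hc n) (Bnorm T c hM hc hc8 n) (norm_nonneg _)
          (eps_nonneg hc.le n))
    have h2 : eps c n * (3 / 2) ≤ 2 * c * 2⁻¹ ^ n := by
      have : eps c n = c * 2⁻¹ ^ n := rfl
      nlinarith [pow_pos (by norm_num : (0:ℝ) < 2⁻¹) n, hc.le]
    linarith
  have hcau : CauchySeq (Bseq T c hM hc) :=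
    cauchySeq_of_le_geometric 2⁻¹ (2 * c) (by norm_num) hdistseq
  obtain ⟨Bl, hBl⟩ := cauchySeq_tendsto_of_complete hcau
  have hdist : ∀ j, ‖Bseq T c hM hc j - Bl‖ ≤ 4 * c * 2⁻¹ ^ j := by
    intro j
    have h := dist_le_of_le_geometric_of_tendsto 2⁻¹ (2 * c) (by norm_num) hdistseq hBl j
    rw [dist_eq_norm] at h
    calc ‖Bseq T c hM hc j - Bl‖ ≤ 2 * c * 2⁻¹ ^ j / (1 - 2⁻¹) := h
      _ = 4 * c * 2⁻¹ ^ j := by ring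
  set S := Bl.comp T with hSdef
  have hTkS : ∀ j, ‖S - Tk T c hM hc j‖ ≤ 4 * c * 2⁻¹ ^ j * M := by
    intro j
    have heq : S - Tk T c hM hc j = (Bl - Bseq T c hM hc j).comp T := by
      ext x
      simp [hSdef, Tk, ContinuousLinearMap.sub_apply, ContinuousLinearMap.comp_apply]
    rw [heq]
    calc ‖(Bl - Bseq T c hM hc j).comp T‖ ≤ ‖Bl - Bseq T c hM hc j‖ * ‖T‖ :=
        opNorm_comp_le _ _
      _ ≤ 4 * c * 2⁻¹ ^ j * M := by
          rw [norm_sub_rev]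
          exact mul_le_mul_of_nonneg_right (hdist j) (norm_nonneg T)
  have hBl1 : ‖Bl - 1‖ ≤ 4 * c := by
    have h := hdist 0
    simp only [pow_zero, mul_one] at h
    have : Bseq T c hM hc 0 = 1 := rfl
    rw [this] at h
    rw [norm_sub_rev] at h
    exact h
  have hSTnorm : ‖S - T‖ < ε := by
    have heq : S - T = (Bl - 1).comp T := by
      ext x
      simp [hSdef, ContinuousLinearMap.sub_apply, ContinuousLinearMap.comp_apply,
        ContinuousLinearMap.one_apply]
    calc ‖S - T‖ = ‖(Bl - 1).comp T‖ := by rw [heq]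
      _ ≤ ‖Bl - 1‖ * ‖T‖ := opNorm_comp_le _ _
      _ ≤ 4 * c * M := mul_le_mul_of_nonneg_right hBl1 (norm_nonneg T)
      _ < ε := hcε
  -- invertibility of the limit
  have hunit : ‖(1 : Y →L[𝕜] Y) - Bl‖ < 1 := by
    rw [norm_sub_rev]
    have : 4 * c ≤ 4 * 8⁻¹ := by linarith
    calc ‖Bl - 1‖ ≤ 4 * c := hBl1
      _ < 1 := by linarith
  set un : (Y →L[𝕜] Y)ˣ := Units.oneSub ((1 : Y →L[𝕜] Y) - Bl) hunit with hundef
  have hun : (un : Y →L[𝕜] Y) = Bl := by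
    rw [hundef, Units.val_oneSub, sub_sub_cancel]
  set e : Y ≃L[𝕜] Y := ContinuousLinearEquiv.unitsEquiv 𝕜 Y un with hedef
  have he : ⇑e = ⇑Bl := by
    funext y
    rw [hedef, ContinuousLinearEquiv.unitsEquiv_apply, hun]
  set K := closure (⇑T '' Metric.closedBall 0 1) with hK
  have hSball : ⇑S '' Metric.closedBall 0 1 = ⇑Bl '' (⇑T '' Metric.closedBall 0 1) := by
    rw [show ⇑S = ⇑Bl ∘ ⇑T from rfl, Set.image_comp]
  have hclS : closure (⇑S '' Metric.closedBall 0 1) = ⇑Bl '' K := by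
    rw [hSball, ← he, hK]
    have := e.toHomeomorph.image_closure (⇑T '' Metric.closedBall 0 1)
    simp only [ContinuousLinearEquiv.coe_toHomeomorph] at this
    exact (this).symm
  -- weak compactness of S
  have hWC : IsWeaklyCompactOperator S := by
    unfold IsWeaklyCompactOperator
    rw [hclS]
    have himg : ⇑(toWeakSpace 𝕜 Y) '' (⇑Bl '' K)
        = ⇑(WeakSpace.map Bl) '' (⇑(toWeakSpace 𝕜 Y) '' K) := by
      rw [Set.image_image, Set.image_image]
      rfl
    rw [himg]
    exact hT.image (WeakSpace.map Bl).continuous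
  -- the cluster point
  have hmemK : ∀ k, T (xk T c hM hc k) ∈ K := by
    intro k
    exact subset_closure ⟨xk T c hM hc k,
      mem_closedBall_zero_iff.mpr (spec1 T c hM hc k), rfl⟩
  set Kw := ⇑(toWeakSpace 𝕜 Y) '' K with hKw
  set wseq : ℕ → WeakSpace 𝕜 Y := fun k => toWeakSpace 𝕜 Y (T (xk T c hM hc k)) with hwseq
  have hle : Filter.map wseq atTop ≤ 𝓟 Kw := by
    rw [Filter.le_principal_iff, Filter.mem_map]
    exact Filter.Eventually.of_forall fun k => Set.mem_image_of_mem _ (hmemK k)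
  obtain ⟨w, hwKw, hwcl⟩ := hT.exists_clusterPt hle
  obtain ⟨y₀, hy₀K, hy₀⟩ := hwKw
  set u := Bl y₀ with hudef
  have hKball : K ⊆ Metric.closedBall 0 M := by
    apply closure_minimal _ isClosed_closedBall
    rintro y ⟨x, hx, rfl⟩
    rw [mem_closedBall_zero_iff]
    calc ‖T x‖ ≤ ‖T‖ * ‖x‖ := le_opNorm _ _
      _ ≤ M := mul_le_of_le_one_right (norm_nonneg _) (mem_closedBall_zero_iff.mp hx)
  have hy₀n : ‖y₀‖ ≤ M := mem_closedBall_zero_iff.mp (hKball hy₀K)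
  -- lower bound for ‖u‖
  have hlow : ∀ j : ℕ, ‖S‖ - 4 * M * 2⁻¹ ^ j ≤ ‖u‖ := by
    intro j
    set t := (2⁻¹ : ℝ) ^ j with htdef
    have ht0 : (0:ℝ) < t := by positivity
    set h := (gk T c hM hc j).comp (Bseq T c hM hc j) with hhdef
    set φ : WeakSpace 𝕜 Y → ℝ := fun v => ‖h ((toWeakSpace 𝕜 Y).symm v)‖ with hφdef
    have hφcont : Continuous φ := by
      have h1 : Continuous fun v : WeakSpace 𝕜 Y => h ((toWeakSpace 𝕜 Y).symm v) :=
        WeakBilin.eval_continuous ((topDualPairing 𝕜 Y).flip) h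
      exact h1.norm
    have hclv : ClusterPt (φ w) (Filter.map (φ ∘ wseq) atTop) := by
      have h1 : ClusterPt (φ w) (Filter.map φ (Filter.map wseq atTop)) :=
        hwcl.map hφcont.continuousAt Filter.tendsto_map
      rwa [Filter.map_map] at h1
    have hφw : φ w = ‖gk T c hM hc j (Bseq T c hM hc j y₀)‖ := by
      rw [hφdef]
      simp only
      rw [← hy₀, LinearEquiv.symm_apply_apply]
      rfl
    have hφseq : ∀ k, (φ ∘ wseq) k = ‖gk T c hM hc j (Tk T c hM hc j (xk T c hM hc k))‖ := by
      intro k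
      simp only [Function.comp_apply, hφdef, hwseq, LinearEquiv.symm_apply_apply]
      rfl
    -- cluster value bound
    have hbound : ‖Tk T c hM hc j‖ - 3 * M * t
        ≤ ‖gk T c hM hc j (Bseq T c hM hc j y₀)‖ := by
      rw [← hφw]
      by_contra hlt
      push_neg at hlt
      have h1 : Set.Iio (‖Tk T c hM hc j‖ - 3 * M * t) ∈ 𝓝 (φ w) := Iio_mem_nhds hlt
      have h2 : Set.Ici (‖Tk T c hM hc j‖ - 3 * M * t) ∈ Filter.map (φ ∘ wseq) atTop := by
        rw [Filter.mem_map]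
        filter_upwards [Filter.eventually_ge_atTop (j + 1)] with k hk
        rw [Set.mem_preimage, Set.mem_Ici, hφseq k]
        exact B7 T c hM hc hc8 j k (by omega)
      have h3 := Filter.inter_mem (Filter.mem_inf_of_left h1) (Filter.mem_inf_of_right h2)
        (f := 𝓝 (φ w) ⊓ Filter.map (φ ∘ wseq) atTop)
      haveI : (𝓝 (φ w) ⊓ Filter.map (φ ∘ wseq) atTop).NeBot := hclv
      obtain ⟨x, hx1, hx2⟩ := Filter.nonempty_of_mem h3
      rw [Set.mem_Iio] at hx1
      rw [Set.mem_Ici] at hx2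
      linarith
    have hgb : ‖gk T c hM hc j (Bseq T c hM hc j y₀)‖ ≤ ‖Bseq T c hM hc j y₀‖ := by
      calc ‖gk T c hM hc j (Bseq T c hM hc j y₀)‖
          ≤ ‖gk T c hM hc j‖ * ‖Bseq T c hM hc j y₀‖ := le_opNorm _ _
        _ ≤ 1 * ‖Bseq T c hM hc j y₀‖ :=
            mul_le_mul_of_nonneg_right (spec6 T c hM hc j) (norm_nonneg _)
        _ = _ := one_mul _
    have hdiff : ‖u - Bseq T c hM hc j y₀‖ ≤ 4 * c * t * M := by
      have heq : u - Bseq T c hM hc j y₀ = (Bl - Bseq T c hM hc j) y₀ := by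
        simp [hudef, ContinuousLinearMap.sub_apply]
      rw [heq]
      calc ‖(Bl - Bseq T c hM hc j) y₀‖ ≤ ‖Bl - Bseq T c hM hc j‖ * ‖y₀‖ := le_opNorm _ _
        _ ≤ (4 * c * t) * M := by
            apply mul_le_mul _ hy₀n (norm_nonneg _) (by positivity)
            rw [norm_sub_rev]
            exact hdist j
    have hulb : ‖Bseq T c hM hc j y₀‖ - ‖u - Bseq T c hM hc j y₀‖ ≤ ‖u‖ := by
      have := norm_sub_norm_le (Bseq T c hM hc j y₀) u
      have h2 : ‖Bseq T c hM hc j y₀ - u‖ = ‖u - Bseq T c hM hc j y₀‖ := norm_sub_rev _ _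
      linarith
    have hSTk := hTkS j
    have hSn : ‖S‖ ≤ ‖Tk T c hM hc j‖ + 4 * c * t * M := by
      have := norm_sub_norm_le S (Tk T c hM hc j)
      have h2 : 4 * c * 2⁻¹ ^ j * M = 4 * c * t * M := by rw [htdef]
      linarith [hSTk, this]
    have hfin : ‖S‖ - 3 * M * t - 8 * c * t * M ≤ ‖u‖ := by linarith
    have h8c : 8 * c * t * M ≤ t * M := by nlinarith [mul_nonneg ht0.le (norm_nonneg T)]
    have hMt : 3 * M * t + t * M ≤ 4 * M * t := by ring_nf; nlinarith
    linarith
  have hSu : ‖S‖ ≤ ‖u‖ := by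
    have htend : Filter.Tendsto (fun j : ℕ => ‖u‖ + 4 * M * 2⁻¹ ^ j) atTop (𝓝 (‖u‖ + 4 * M * 0)) := by
      apply Filter.Tendsto.add tendsto_const_nhds
      exact (tendsto_pow_atTop_nhds_zero_of_lt_one (by norm_num) (by norm_num)).const_mul _
    rw [mul_zero, add_zero] at htend
    exact ge_of_tendsto' htend fun j => by linarith [hlow j]
  have humem : u ∈ closure (⇑S '' Metric.closedBall 0 1) := by
    rw [hclS]
    exact Set.mem_image_of_mem _ hy₀K
  have huS : ‖u‖ ≤ ‖S‖ := by
    have hsub : closure (⇑S '' Metric.closedBall 0 1) ⊆ Metric.closedBall 0 ‖S‖ := by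
      apply closure_minimal _ isClosed_closedBall
      rintro y ⟨x, hx, rfl⟩
      rw [mem_closedBall_zero_iff]
      calc ‖S x‖ ≤ ‖S‖ * ‖x‖ := le_opNorm _ _
        _ ≤ ‖S‖ := mul_le_of_le_one_right (norm_nonneg _) (mem_closedBall_zero_iff.mp hx)
    exact mem_closedBall_zero_iff.mp (hsub humem)
  exact ⟨S, hWC, ⟨u, humem, le_antisymm huS hSu⟩, hSTnorm⟩
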